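/- Let V be a complex inner product space and let (L_n)_{n∈ℤ} and (L̃_n)_{n∈ℤ} be families of linear endomorphisms of V such that: (i) ⟨L_n u, v⟩ = ⟨u, L_{−n} v⟩ and ⟨L̃_n u, v⟩ = ⟨u, L̃_{−n} v⟩ for all u, v ∈ V and n ∈ ℤ; (ii) ⁅L_j, L_n⁆ = (j−n)·L_{j+n} and ⁅L̃_j, L̃_n⁆ = (j−n)·L̃_{j+n} for all j ∈ {−1, 0, 1} and n ∈ ℤ; (iii) L_j = L̃_j for j ∈ {−1, 0, 1}; (iv) L_3 = L̃_3. Then L_n = L̃_n for all n ∈ ℤ. -/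

import Mathlib

/-- Concluding step of the uniqueness theorem for diffeomorphism symmetry:
two hermitian dimension-2 Möbius covariant families with the same Möbius part
and the same cubic mode coincide. -/
theorem uniqueness_of_diffeomorphism_symmetry_modes
    {V : Type*} [NormedAddCommGroup V] [InnerProductSpace ℂ V]
    (L L' : ℤ → Module.End ℂ V)
    (hermL : ∀ (n : ℤ) (u v : V), (inner ℂ ((L n) u) v : ℂ) = inner ℂ u ((L (-n)) v))
    (hermL' : ∀ (n : ℤ) (u v : V), (inner ℂ ((L' n) u) v : ℂ) = inner ℂ u ((L' (-n)) v))
    (hmobL : ∀ j ∈ ({-1, 0, 1} : Set ℤ), ∀ n : ℤ,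
      ⁅L j, L n⁆ = ((j - n : ℤ) : ℂ) • L (j + n))
    (hmobL' : ∀ j ∈ ({-1, 0, 1} : Set ℤ), ∀ n : ℤ,
      ⁅L' j, L' n⁆ = ((j - n : ℤ) : ℂ) • L' (j + n))
    (heq : ∀ j ∈ ({-1, 0, 1} : Set ℤ), L j = L' j)
    (heq3 : L 3 = L' 3) :
    ∀ n : ℤ, L n = L' n := by
  have h0 : L 0 = L' 0 := heq 0 (by simp)
  have h1 : L 1 = L' 1 := heq 1 (by simp)
  have hm1 : L (-1) = L' (-1) := heq (-1) (by simp)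
  have cancel : ∀ (c : ℂ) (A B : Module.End ℂ V), c ≠ 0 → c • A = c • B → A = B :=
    fun c A B hc h => smul_right_injective _ hc h
  have h2 : L 2 = L' 2 := by
    have e1 := hmobL (-1) (by simp) 3
    have e2 := hmobL' (-1) (by simp) 3
    rw [← heq3, ← hm1] at e2
    rw [e1] at e2
    norm_num at e2
    exact e2
  -- upward induction from 3
  have hpos : ∀ n : ℤ, 3 ≤ n → L n = L' n := by
    intro n hn
    refine Int.le_induction (motive := fun k _ => L k = L' k) heq3 (fun n hn ih => ?_) n hn
    have e1 := hmobL 1 (by simp) n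
    have e2 := hmobL' 1 (by simp) n
    rw [← h1, ← ih] at e2
    rw [e1] at e2
    have hc : ((1 - n : ℤ) : ℂ) ≠ 0 := Int.cast_ne_zero.mpr (by omega)
    have := cancel _ _ _ hc e2
    rwa [show (1 : ℤ) + n = n + 1 by ring] at this
  have hall : ∀ n : ℤ, 0 ≤ n → L n = L' n := by
    intro n hn
    rcases lt_or_ge n 3 with h | h
    · interval_cases n
      · exact h0
      · exact h1
      · exact h2
    · exact hpos n h
  intro n
  rcases le_or_gt 0 n with h | h
  · exact hall n h
  · have hn : L (-n) = L' (-n) := hall (-n) (by omega)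
    ext v
    apply ext_inner_left ℂ
    intro u
    have e1 := hermL (-n) u v
    have e2 := hermL' (-n) u v
    rw [neg_neg] at e1 e2
    rw [← e1, ← e2, hn]
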